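/- arXiv:2111.12149 — 3 statements merged into one kernel-verified Lean document; each statement's English description precedes it below -/
import Mathlib

section
/- Fix an iterate (α^t, β^t, γ^t) and step sizes s_β > 0, s_{γ(k)} > 0 (k = 1,…,K), s_α > 0. Define: ν = β^t − s_β ∇_β L(α^t, β^t, γ^t); β^{t+1} ∈ ℝ^{p×C} with rows β^{t+1}_{j,:} = max(1 − s_β λ/‖ν_{j,:}‖₂, 0) · ν_{j,:} (and β^{t+1}_{j,:} = 0 when ν_{j,:} = 0); γ^{t+1}_{(k)} = (1 + s_{γ(k)} ρ)^{-1} (γ^t_{(k)} − s_{γ(k)} ∇_{γ_{(k)}} L(α^t, β^{t+1}, γ^t)) for each k; and α^{t+1} = α^t − s_α ∇_α L(α^t, β^{t+1}, γ^{t+1}). Assume the step sizes are small enough that the quadratic majorization of L holds in each block, i.e.: (i) L(α^t, β, γ^t) ≤ L(α^t, β^t, γ^t) + ⟨∇_β L(α^t, β^t, γ^t), β − β^t⟩ + (1/(2 s_β))‖β − β^t‖_F² for all β ∈ ℝ^{p×C}; (ii) for each k, the dataset-k portion of L, as a function of γ_{(k)} with (α^t, β^{t+1}) and the other γ blocks fixed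 at γ^t, is majorized at γ^t_{(k)} by its first-order expansion plus (1/(2 s_{γ(k)}))‖γ_{(k)} − γ^t_{(k)}‖_F²; and (iii) L(α, β^{t+1}, γ^{t+1}) ≤ L(α^t, β^{t+1}, γ^{t+1}) + ⟨∇_α L(α^t, β^{t+1}, γ^{t+1}), α − α^t⟩ + (1/(2 s_α))‖α − α^t‖₂² for all α ∈ ℝ^C. Then F_{λ,ρ}(α^{t+1}, β^{t+1}, γ^{t+1}) ≤ F_{λ,ρ}(α^t, β^t, γ^t). -/
open scoped BigOperators

/-- Linear predictor `η_{(k)i,l} = α_l + x_{(k)i}ᵀ β_l + z_{(k)i}ᵀ γ_{(k)l}`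
for a single observation with predictors `x`, batch covariates `z`. -/
noncomputable def eta {C : Type} [Fintype C] {p r : ℕ}
    (x : Fin p → ℝ) (z : Fin r → ℝ)
    (α : C → ℝ) (β : Fin p → C → ℝ) (γ : Fin r → C → ℝ) (l : C) : ℝ :=
  α l + ∑ j, x j * β j l + ∑ q, z q * γ q l

/-- Negative log-likelihood of one binned multinomial observation with bin `S`,
as a function of the linear predictor `η ∈ ℝ^C`. -/
noncomputable def obsNLL {C : Type} [Fintype C] (S : Finset C) (η : C → ℝ) : ℝ :=
  - Real.log ((∑ l ∈ S, Real.exp (η l)) / ∑ v, Real.exp (η v))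

/-- Scaled negative log-likelihood
`L(α,β,γ) = -(1/N) Σ_k Σ_i log( Σ_{l∈S_{(k)i}} exp(η_{(k)i,l}) / Σ_{v∈C} exp(η_{(k)i,v}) )`. -/
noncomputable def negLogLik {C : Type} [Fintype C] {K p r : ℕ} (n : Fin K → ℕ)
    (x : (k : Fin K) → Fin (n k) → Fin p → ℝ)
    (z : (k : Fin K) → Fin (n k) → Fin r → ℝ)
    (S : (k : Fin K) → Fin (n k) → Finset C)
    (α : C → ℝ) (β : Fin p → C → ℝ) (γ : Fin K → Fin r → C → ℝ) : ℝ :=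
  ((∑ k, n k : ℕ) : ℝ)⁻¹ * ∑ k, ∑ i, obsNLL (S k i) (eta (x k i) (z k i) α β (γ k))

/-- Penalized objective
`F_{λ,ρ}(α,β,γ) = L(α,β,γ) + λ Σ_j ‖β_{j,:}‖₂ + (ρ/2) Σ_k ‖γ_{(k)}‖_F²`. -/
noncomputable def penObj {C : Type} [Fintype C] {K p r : ℕ} (n : Fin K → ℕ)
    (x : (k : Fin K) → Fin (n k) → Fin p → ℝ)
    (z : (k : Fin K) → Fin (n k) → Fin r → ℝ)
    (S : (k : Fin K) → Fin (n k) → Finset C)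
    (lam ρ : ℝ)
    (α : C → ℝ) (β : Fin p → C → ℝ) (γ : Fin K → Fin r → C → ℝ) : ℝ :=
  negLogLik n x z S α β γ + lam * ∑ j, Real.sqrt (∑ l, (β j l) ^ 2)
    + (ρ / 2) * ∑ k, ∑ q, ∑ l, (γ k q l) ^ 2


open scoped BigOperators

lemma quad_ridge_step (s ρ a D g : ℝ) (hs : 0 < s) (hρ : 0 < ρ)
    (hg : g = (1 + s * ρ)⁻¹ * (a - s * D)) :
    D * (g - a) + 1 / (2 * s) * (g - a) ^ 2 + ρ / 2 * g ^ 2 ≤ ρ / 2 * a ^ 2 := by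
  have h1 : (0:ℝ) < 1 + s * ρ := by positivity
  have hg' : g * (1 + s * ρ) = a - s * D := by
    rw [hg]; field_simp
  have hD : D = (a - g * (1 + s * ρ)) / s := by
    field_simp; linarith [hg']
  subst hD
  rw [← sub_nonpos]
  have he : (a - g * (1 + s * ρ)) / s * (g - a) + 1 / (2 * s) * (g - a) ^ 2
      + ρ / 2 * g ^ 2 - ρ / 2 * a ^ 2 = -((g - a) ^ 2 * (1 + s * ρ)) / (2 * s) := by
    field_simp; ring
  rw [he]
  apply div_nonpos_of_nonpos_of_nonneg
  · nlinarith [sq_nonneg (g - a)]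
  · linarith

lemma alpha_step (s a D g : ℝ) (hs : 0 < s) (hg : g = a - s * D) :
    D * (g - a) + 1 / (2 * s) * (g - a) ^ 2 ≤ 0 := by
  subst hg
  have : D * (a - s * D - a) + 1 / (2 * s) * (a - s * D - a) ^ 2 = -(s * D ^ 2) / 2 := by
    field_simp; ring
  rw [this]
  have : 0 ≤ s * D ^ 2 := by positivity
  linarith

lemma cauchy_schwarz_sum {C : Type} [Fintype C] (a ν : C → ℝ) :
    ∑ l, a l * ν l ≤ Real.sqrt (∑ l, (a l) ^ 2) * Real.sqrt (∑ l, (ν l) ^ 2) := by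
  have h := Finset.sum_mul_sq_le_sq_mul_sq Finset.univ a ν
  have h2 : (∑ l, a l * ν l) ≤ Real.sqrt ((∑ l, (a l) ^ 2) * ∑ l, (ν l) ^ 2) := by
    rcases le_or_gt (∑ l, a l * ν l) 0 with h0 | h0
    · exact h0.trans (Real.sqrt_nonneg _)
    · exact (Real.le_sqrt h0.le (by positivity)).mpr h
  rwa [Real.sqrt_mul (by positivity)] at h2

lemma sum_sub_sq_expand {C : Type} [Fintype C] (a ν : C → ℝ) :
    ∑ l, (a l - ν l) ^ 2 = ∑ l, (a l) ^ 2 - 2 * ∑ l, a l * ν l + ∑ l, (ν l) ^ 2 := by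
  calc ∑ l, (a l - ν l) ^ 2 = ∑ l, ((a l) ^ 2 - 2 * (a l * ν l) + (ν l) ^ 2) := by
        apply Finset.sum_congr rfl; intros; ring
    _ = _ := by
        rw [Finset.sum_add_distrib, Finset.sum_sub_distrib, ← Finset.mul_sum]

lemma group_soft_threshold_min {C : Type} [Fintype C] (t : ℝ) (ht : 0 < t)
    (ν a b : C → ℝ)
    (hb1 : ν ≠ 0 → ∀ l, b l = max (1 - t / Real.sqrt (∑ l', (ν l') ^ 2)) 0 * ν l)
    (hb2 : ν = 0 → b = 0) :
    1 / 2 * ∑ l, (b l - ν l) ^ 2 + t * Real.sqrt (∑ l, (b l) ^ 2) ≤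
      1 / 2 * ∑ l, (a l - ν l) ^ 2 + t * Real.sqrt (∑ l, (a l) ^ 2) := by
  set A := Real.sqrt (∑ l, (a l) ^ 2) with hA
  set V := Real.sqrt (∑ l, (ν l) ^ 2) with hV
  have hA2 : A ^ 2 = ∑ l, (a l) ^ 2 := Real.sq_sqrt (by positivity)
  have hV2 : V ^ 2 = ∑ l, (ν l) ^ 2 := Real.sq_sqrt (by positivity)
  have hAnn : 0 ≤ A := Real.sqrt_nonneg _
  have hVnn : 0 ≤ V := Real.sqrt_nonneg _
  have hCS : ∑ l, a l * ν l ≤ A * V := cauchy_schwarz_sum a ν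
  have hexa := sum_sub_sq_expand a ν
  by_cases hν0 : ν = 0
  · have hb := hb2 hν0
    subst hb; subst hν0
    simp only [Pi.zero_apply, sub_zero, zero_sub, neg_zero, ne_eq, OfNat.ofNat_ne_zero,
      not_false_eq_true, zero_pow, Finset.sum_const_zero, Real.sqrt_zero, mul_zero, add_zero]
    positivity
  · have hb := hb1 hν0
    have hVpos : 0 < V := by
      rw [hV]
      apply Real.sqrt_pos.mpr
      obtain ⟨l0, hl0⟩ : ∃ l, ν l ≠ 0 := by
        by_contra hc; push_neg at hc; exact hν0 (funext hc)
      exact Finset.sum_pos' (fun _ _ => sq_nonneg _) ⟨l0, Finset.mem_univ _, by positivity⟩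
    rcases le_or_gt V t with hVt | htV
    · have hc0 : max (1 - t / V) 0 = 0 := by
        apply max_eq_right
        have : 1 ≤ t / V := (le_div_iff₀ hVpos).mpr (by linarith)
        linarith
      have hbz : ∀ l, b l = 0 := fun l => by rw [hb l, hc0, zero_mul]
      have e1 : ∑ l, (b l - ν l) ^ 2 = ∑ l, (ν l) ^ 2 := by
        apply Finset.sum_congr rfl; intro l _; rw [hbz l]; ring
      have e2 : Real.sqrt (∑ l, (b l) ^ 2) = 0 := by
        have : ∑ l, (b l) ^ 2 = 0 := by
          apply Finset.sum_eq_zero; intro l _; rw [hbz l]; ring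
        rw [this, Real.sqrt_zero]
      rw [e1, e2, mul_zero, add_zero, hexa, ← hA2, ← hV2]
      nlinarith [mul_le_mul_of_nonneg_left hVt hAnn]
    · have hcpos : 0 < 1 - t / V := by
        have : t / V < 1 := (div_lt_one hVpos).mpr htV; linarith
      have hcmax : max (1 - t / V) 0 = 1 - t / V := max_eq_left hcpos.le
      have hbc : ∀ l, b l = (1 - t / V) * ν l := fun l => by rw [hb l, hcmax]
      have e1 : ∑ l, (b l - ν l) ^ 2 = (1 - t / V - 1) ^ 2 * ∑ l, (ν l) ^ 2 := by
        rw [Finset.mul_sum]; apply Finset.sum_congr rfl; intro l _; rw [hbc l]; ring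
      have e2 : ∑ l, (b l) ^ 2 = (1 - t / V) ^ 2 * ∑ l, (ν l) ^ 2 := by
        rw [Finset.mul_sum]; apply Finset.sum_congr rfl; intro l _; rw [hbc l]; ring
      have e3 : Real.sqrt (∑ l, (b l) ^ 2) = (1 - t / V) * V := by
        rw [e2, ← hV2, Real.sqrt_mul (by positivity), Real.sqrt_sq hcpos.le,
          Real.sqrt_sq hVnn]
      have e4 : (1 - t / V - 1) ^ 2 * ∑ l, (ν l) ^ 2 = t ^ 2 := by
        rw [← hV2]
        have hVne : V ≠ 0 := ne_of_gt hVpos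
        field_simp
        ring
      rw [e1, e3, e4, hexa, ← hA2, ← hV2]
      have ect : t * ((1 - t / V) * V) = t * (V - t) := by field_simp
      rw [ect]
      nlinarith [sq_nonneg (A - V + t)]

lemma div_scale_ineq (s X Y Nb Na lam : ℝ) (hs : 0 < s)
    (h : 1 / 2 * X + s * lam * Nb ≤ 1 / 2 * Y + s * lam * Na) :
    1 / (2 * s) * (X - Y) + lam * Nb - lam * Na ≤ 0 := by
  have h' := mul_le_mul_of_nonneg_left h (inv_nonneg.mpr hs.le)
  have e1 : s⁻¹ * (1 / 2 * X + s * lam * Nb) = 1 / (2 * s) * X + lam * Nb := by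
    field_simp
  have e2 : s⁻¹ * (1 / 2 * Y + s * lam * Na) = 1 / (2 * s) * Y + lam * Na := by
    field_simp
  rw [e1, e2] at h'
  linarith

set_option maxHeartbeats 2000000 in
/-- Lemma 1 (descent property): one full iteration of the blockwise proximal gradient
algorithm (β-prox step, γ-ridge-prox steps, α-gradient step), with step sizes small enough
that the blockwise quadratic majorizations of `L` hold, does not increase the penalized
objective `F_{λ,ρ}`. -/
theorem blockwise_prox_grad_descent_property
    {C : Type} [Fintype C] [DecidableEq C] [Nonempty C]
    {K p r : ℕ} (hK : 1 ≤ K) (n : Fin K → ℕ) (hn : ∀ k, 1 ≤ n k)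
    (x : (k : Fin K) → Fin (n k) → Fin p → ℝ)
    (z : (k : Fin K) → Fin (n k) → Fin r → ℝ)
    (S : (k : Fin K) → Fin (n k) → Finset C) (hS : ∀ k i, (S k i).Nonempty)
    (lam ρ : ℝ) (hlam : 0 < lam) (hρ : 0 < ρ)
    -- current iterate and step sizes
    (αt : C → ℝ) (βt : Fin p → C → ℝ) (γt : Fin K → Fin r → C → ℝ)
    (sβ : ℝ) (hsβ : 0 < sβ) (sγ : Fin K → ℝ) (hsγ : ∀ k, 0 < sγ k) (sα : ℝ) (hsα : 0 < sα)
    -- ν = βᵗ - s_β ∇_β L(αᵗ, βᵗ, γᵗ)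
    (ν : Fin p → C → ℝ)
    (hν : ∀ (j : Fin p) (l : C),
      ν j l = βt j l - sβ *
        fderiv ℝ (fun β => negLogLik n x z S αt β γt) βt (Pi.single j (Pi.single l 1)))
    -- β-update: rowwise group soft-thresholding of ν
    (βn : Fin p → C → ℝ)
    (hβn : ∀ j : Fin p,
      (ν j ≠ 0 → ∀ l : C,
        βn j l = max (1 - sβ * lam / Real.sqrt (∑ l', (ν j l') ^ 2)) 0 * ν j l) ∧
      (ν j = 0 → βn j = 0))
    -- γ-update: ridge-prox step on each block, using ∇_{γ_{(k)}} L(αᵗ, βᵗ⁺¹, γᵗ)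
    (γn : Fin K → Fin r → C → ℝ)
    (hγn : ∀ (k : Fin K) (q : Fin r) (l : C),
      γn k q l = (1 + sγ k * ρ)⁻¹ * (γt k q l - sγ k *
        fderiv ℝ (fun g => negLogLik n x z S αt βn (Function.update γt k g)) (γt k)
          (Pi.single q (Pi.single l 1))))
    -- α-update: gradient step using ∇_α L(αᵗ, βᵗ⁺¹, γᵗ⁺¹)
    (αn : C → ℝ)
    (hαn : ∀ l : C,
      αn l = αt l - sα *
        fderiv ℝ (fun α => negLogLik n x z S α βn γn) αt (Pi.single l 1))
    -- (i) quadratic majorization of L in the β-block at βᵗ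
    (hmajβ : ∀ β : Fin p → C → ℝ,
      negLogLik n x z S αt β γt ≤
        negLogLik n x z S αt βt γt
          + ∑ j, ∑ l,
              fderiv ℝ (fun β' => negLogLik n x z S αt β' γt) βt
                (Pi.single j (Pi.single l 1)) * (β j l - βt j l)
          + (1 / (2 * sβ)) * ∑ j, ∑ l, (β j l - βt j l) ^ 2)
    -- (ii) quadratic majorization of the dataset-k portion of L in γ_{(k)} at γᵗ_{(k)},
    -- with (αᵗ, βᵗ⁺¹) and the other γ blocks fixed
    (hmajγ : ∀ (k : Fin K) (g : Fin r → C → ℝ),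
      ((∑ k', n k' : ℕ) : ℝ)⁻¹ * ∑ i, obsNLL (S k i) (eta (x k i) (z k i) αt βn g) ≤
        ((∑ k', n k' : ℕ) : ℝ)⁻¹ * ∑ i, obsNLL (S k i) (eta (x k i) (z k i) αt βn (γt k))
          + ∑ q, ∑ l,
              fderiv ℝ
                (fun g' => ((∑ k', n k' : ℕ) : ℝ)⁻¹ *
                  ∑ i, obsNLL (S k i) (eta (x k i) (z k i) αt βn g')) (γt k)
                (Pi.single q (Pi.single l 1)) * (g q l - γt k q l)
          + (1 / (2 * sγ k)) * ∑ q, ∑ l, (g q l - γt k q l) ^ 2)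
    -- (iii) quadratic majorization of L in the α-block at αᵗ
    (hmajα : ∀ α : C → ℝ,
      negLogLik n x z S α βn γn ≤
        negLogLik n x z S αt βn γn
          + ∑ l,
              fderiv ℝ (fun α' => negLogLik n x z S α' βn γn) αt
                (Pi.single l 1) * (α l - αt l)
          + (1 / (2 * sα)) * ∑ l, (α l - αt l) ^ 2) :
    penObj n x z S lam ρ αn βn γn ≤ penObj n x z S lam ρ αt βt γt := by
  classical
  -- ============ α step ============
  have hαsum : (∑ l, fderiv ℝ (fun α' => negLogLik n x z S α' βn γn) αt
        (Pi.single l 1) * (αn l - αt l))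
      + (1 / (2 * sα)) * ∑ l, (αn l - αt l) ^ 2 ≤ 0 := by
    rw [Finset.mul_sum, ← Finset.sum_add_distrib]
    apply Finset.sum_nonpos
    intro l _
    exact alpha_step sα (αt l) _ (αn l) hsα (hαn l)
  have h3 : negLogLik n x z S αn βn γn ≤ negLogLik n x z S αt βn γn := by
    have := hmajα αn
    linarith
  -- ============ β step ============
  have hβsum : (∑ j, ∑ l,
        fderiv ℝ (fun β' => negLogLik n x z S αt β' γt) βt
          (Pi.single j (Pi.single l 1)) * (βn j l - βt j l))
      + (1 / (2 * sβ)) * ∑ j, ∑ l, (βn j l - βt j l) ^ 2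
      + lam * ∑ j, Real.sqrt (∑ l, (βn j l) ^ 2)
      - lam * ∑ j, Real.sqrt (∑ l, (βt j l) ^ 2) ≤ 0 := by
    rw [Finset.mul_sum, Finset.mul_sum, Finset.mul_sum, ← Finset.sum_add_distrib,
      ← Finset.sum_add_distrib, ← Finset.sum_sub_distrib]
    apply Finset.sum_nonpos
    intro j _
    have hDrow : ∀ l, fderiv ℝ (fun β' => negLogLik n x z S αt β' γt) βt
        (Pi.single j (Pi.single l 1)) = (βt j l - ν j l) / sβ := by
      intro l
      have h := hν j l
      field_simp
      linarith
    have hrw : (∑ l, fderiv ℝ (fun β' => negLogLik n x z S αt β' γt) βt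
          (Pi.single j (Pi.single l 1)) * (βn j l - βt j l))
        + 1 / (2 * sβ) * ∑ l, (βn j l - βt j l) ^ 2
        = 1 / (2 * sβ) * ((∑ l, (βn j l - ν j l) ^ 2) - ∑ l, (βt j l - ν j l) ^ 2) := by
      rw [Finset.mul_sum, ← Finset.sum_add_distrib, ← Finset.sum_sub_distrib,
        Finset.mul_sum]
      apply Finset.sum_congr rfl
      intro l _
      rw [hDrow l]
      have hsne : sβ ≠ 0 := ne_of_gt hsβ
      field_simp
      ring
    have hcore := group_soft_threshold_min (sβ * lam) (by positivity) (ν j) (βt j) (βn j)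
      (fun h0 l => ((hβn j).1 h0) l) (hβn j).2
    have hdiv := div_scale_ineq sβ (∑ l, (βn j l - ν j l) ^ 2) (∑ l, (βt j l - ν j l) ^ 2)
      (Real.sqrt (∑ l, (βn j l) ^ 2)) (Real.sqrt (∑ l, (βt j l) ^ 2)) lam hsβ hcore
    linarith [hrw ▸ hdiv, hrw]
  have h1 : negLogLik n x z S αt βn γt + lam * ∑ j, Real.sqrt (∑ l, (βn j l) ^ 2)
      ≤ negLogLik n x z S αt βt γt + lam * ∑ j, Real.sqrt (∑ l, (βt j l) ^ 2) := by
    have := hmajβ βn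
    linarith
  -- ============ γ step ============
  have hfeq : ∀ k : Fin K, (fun g => negLogLik n x z S αt βn (Function.update γt k g)) =
      (fun g => (((∑ k', n k' : ℕ) : ℝ)⁻¹ *
          ∑ i, obsNLL (S k i) (eta (x k i) (z k i) αt βn g))
        + ((∑ k', n k' : ℕ) : ℝ)⁻¹ *
          ∑ k' ∈ Finset.univ.erase k, ∑ i,
            obsNLL (S k' i) (eta (x k' i) (z k' i) αt βn (γt k'))) := by
    intro k
    funext g
    simp only [negLogLik]
    have hsplit := Finset.add_sum_erase Finset.univ
      (fun k₁ => ∑ i, obsNLL (S k₁ i) (eta (x k₁ i) (z k₁ i) αt βn (Function.update γt k g k₁)))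
      (Finset.mem_univ k)
    have herase : ∑ k' ∈ Finset.univ.erase k, ∑ i,
        obsNLL (S k' i) (eta (x k' i) (z k' i) αt βn (Function.update γt k g k'))
        = ∑ k' ∈ Finset.univ.erase k, ∑ i,
        obsNLL (S k' i) (eta (x k' i) (z k' i) αt βn (γt k')) :=
      Finset.sum_congr rfl (fun k' hk' => by
        rw [Function.update_of_ne (Finset.ne_of_mem_erase hk')])
    rw [← hsplit, mul_add]
    simp only [Function.update_self]
    rw [herase]
  have hkstep : ∀ k : Fin K,
      ((∑ k', n k' : ℕ) : ℝ)⁻¹ * (∑ i, obsNLL (S k i) (eta (x k i) (z k i) αt βn (γn k)))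
        + ρ / 2 * ∑ q, ∑ l, (γn k q l) ^ 2
      ≤ ((∑ k', n k' : ℕ) : ℝ)⁻¹ * (∑ i, obsNLL (S k i) (eta (x k i) (z k i) αt βn (γt k)))
        + ρ / 2 * ∑ q, ∑ l, (γt k q l) ^ 2 := by
    intro k
    have hm := hmajγ k (γn k)
    have hD2 : ∀ (q : Fin r) (l : C),
        fderiv ℝ (fun g => negLogLik n x z S αt βn (Function.update γt k g)) (γt k)
          (Pi.single q (Pi.single l 1))
        = fderiv ℝ (fun g' => ((∑ k', n k' : ℕ) : ℝ)⁻¹ *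
            ∑ i, obsNLL (S k i) (eta (x k i) (z k i) αt βn g')) (γt k)
          (Pi.single q (Pi.single l 1)) := by
      intro q l
      rw [hfeq k, fderiv_add_const]
    have hsum : (∑ q, ∑ l,
          fderiv ℝ (fun g' => ((∑ k', n k' : ℕ) : ℝ)⁻¹ *
            ∑ i, obsNLL (S k i) (eta (x k i) (z k i) αt βn g')) (γt k)
            (Pi.single q (Pi.single l 1)) * (γn k q l - γt k q l))
        + (1 / (2 * sγ k)) * ∑ q, ∑ l, (γn k q l - γt k q l) ^ 2
        + ρ / 2 * ∑ q, ∑ l, (γn k q l) ^ 2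
        - ρ / 2 * ∑ q, ∑ l, (γt k q l) ^ 2 ≤ 0 := by
      rw [Finset.mul_sum, Finset.mul_sum, Finset.mul_sum, ← Finset.sum_add_distrib,
        ← Finset.sum_add_distrib, ← Finset.sum_sub_distrib]
      apply Finset.sum_nonpos
      intro q _
      rw [Finset.mul_sum, Finset.mul_sum, Finset.mul_sum, ← Finset.sum_add_distrib,
        ← Finset.sum_add_distrib, ← Finset.sum_sub_distrib]
      apply Finset.sum_nonpos
      intro l _
      have hγ' : γn k q l = (1 + sγ k * ρ)⁻¹ * (γt k q l - sγ k *
          fderiv ℝ (fun g' => ((∑ k', n k' : ℕ) : ℝ)⁻¹ *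
            ∑ i, obsNLL (S k i) (eta (x k i) (z k i) αt βn g')) (γt k)
            (Pi.single q (Pi.single l 1))) := by
        rw [hγn k q l, hD2 q l]
      have := quad_ridge_step (sγ k) ρ (γt k q l) _ (γn k q l) (hsγ k) hρ hγ'
      linarith
    linarith
  have h2 : negLogLik n x z S αt βn γn + ρ / 2 * ∑ k, ∑ q, ∑ l, (γn k q l) ^ 2
      ≤ negLogLik n x z S αt βn γt + ρ / 2 * ∑ k, ∑ q, ∑ l, (γt k q l) ^ 2 := by
    have hsum := Finset.sum_le_sum (fun k (_ : k ∈ Finset.univ) => hkstep k)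
    rw [Finset.sum_add_distrib, Finset.sum_add_distrib] at hsum
    have e1 : negLogLik n x z S αt βn γn
        = ∑ k, ((∑ k', n k' : ℕ) : ℝ)⁻¹ *
            (∑ i, obsNLL (S k i) (eta (x k i) (z k i) αt βn (γn k))) := by
      simp only [negLogLik, Finset.mul_sum]
    have e2 : negLogLik n x z S αt βn γt
        = ∑ k, ((∑ k', n k' : ℕ) : ℝ)⁻¹ *
            (∑ i, obsNLL (S k i) (eta (x k i) (z k i) αt βn (γt k))) := by
      simp only [negLogLik, Finset.mul_sum]
    have e3 : ρ / 2 * ∑ k, ∑ q, ∑ l, (γn k q l) ^ 2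
        = ∑ k, ρ / 2 * ∑ q, ∑ l, (γn k q l) ^ 2 := Finset.mul_sum _ _ _
    have e4 : ρ / 2 * ∑ k, ∑ q, ∑ l, (γt k q l) ^ 2
        = ∑ k, ρ / 2 * ∑ q, ∑ l, (γt k q l) ^ 2 := Finset.mul_sum _ _ _
    rw [e1, e2, e3, e4]
    exact hsum
  -- ============ combine ============
  simp only [penObj]
  linarith [h1, h2, h3]
end

section
/- Let X_{(k)} ∈ ℝ^{n_k×p} denote the matrix whose i-th row is x_{(k)i}. For every α ∈ ℝ^C, γ, every β^t, β ∈ ℝ^{p×C}, and every step size s_β with 0 < s_β < N / (√|C| · Σ_{k=1}^K ‖X_{(k)}‖_F²), the quadratic majorization L(α, β, γ) ≤ L(α, β^t, γ) + tr( ∇_β L(α, β^t, γ)ᵀ (β − β^t) ) + (1/(2 s_β)) ‖β − β^t‖_F² holds, where ∇_β L denotes the gradient of β ↦ L(α, β, γ). -/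
open scoped BigOperators

lemma sumexp_pos {C : Type} [Fintype C] {T : Finset C} (hT : T.Nonempty) (f : C → ℝ) :
    0 < ∑ l ∈ T, Real.exp (f l) :=
  Finset.sum_pos (fun l _ => Real.exp_pos _) hT

lemma hasDerivAt_affine {c a t : ℝ} : HasDerivAt (fun t : ℝ => c + t * a) a t := by
  simpa using (hasDerivAt_mul_const a).const_add c

lemma hasDerivAt_sumexp {C : Type} [Fintype C] (T : Finset C) (c a : C → ℝ) (t : ℝ) :
    HasDerivAt (fun t => ∑ l ∈ T, Real.exp (c l + t * a l))
      (∑ l ∈ T, a l * Real.exp (c l + t * a l)) t := by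
  apply HasDerivAt.fun_sum
  intro l _
  simpa [mul_comm] using (hasDerivAt_affine (c := c l) (a := a l) (t := t)).exp

lemma hasDerivAt_lse {C : Type} [Fintype C] {T : Finset C} (hT : T.Nonempty) (c a : C → ℝ)
    (t : ℝ) :
    HasDerivAt (fun t => Real.log (∑ l ∈ T, Real.exp (c l + t * a l)))
      ((∑ l ∈ T, a l * Real.exp (c l + t * a l)) / (∑ l ∈ T, Real.exp (c l + t * a l))) t :=
  (hasDerivAt_sumexp T c a t).log (sumexp_pos hT _).ne'

lemma hasDerivAt_lse1 {C : Type} [Fintype C] {T : Finset C} (hT : T.Nonempty) (c a : C → ℝ)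
    (t : ℝ) :
    HasDerivAt
      (fun t => (∑ l ∈ T, a l * Real.exp (c l + t * a l)) / (∑ l ∈ T, Real.exp (c l + t * a l)))
      (((∑ l ∈ T, a l ^ 2 * Real.exp (c l + t * a l)) * (∑ l ∈ T, Real.exp (c l + t * a l))
          - (∑ l ∈ T, a l * Real.exp (c l + t * a l)) ^ 2)
        / (∑ l ∈ T, Real.exp (c l + t * a l)) ^ 2) t := by
  have hnum : HasDerivAt (fun t => ∑ l ∈ T, a l * Real.exp (c l + t * a l))
      (∑ l ∈ T, a l ^ 2 * Real.exp (c l + t * a l)) t := by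
    apply HasDerivAt.fun_sum
    intro l _
    have := ((hasDerivAt_affine (c := c l) (a := a l) (t := t)).exp).const_mul (a l)
    exact this.congr_deriv (by ring)
  have h := hnum.fun_div (hasDerivAt_sumexp T c a t) (sumexp_pos hT _).ne'
  exact h.congr_deriv (by ring)

lemma cs_sq_le {C : Type} [Fintype C] (T : Finset C) (a f : C → ℝ) :
    (∑ l ∈ T, a l * Real.exp (f l)) ^ 2
      ≤ (∑ l ∈ T, a l ^ 2 * Real.exp (f l)) * (∑ l ∈ T, Real.exp (f l)) := by
  have key := Finset.sum_mul_sq_le_sq_mul_sq T (fun l => a l * Real.exp (f l / 2))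
      (fun l => Real.exp (f l / 2))
  have he : ∀ l : C, Real.exp (f l / 2) * Real.exp (f l / 2) = Real.exp (f l) := by
    intro l; rw [← Real.exp_add]; ring_nf
  calc (∑ l ∈ T, a l * Real.exp (f l)) ^ 2
      = (∑ l ∈ T, (a l * Real.exp (f l / 2)) * Real.exp (f l / 2)) ^ 2 := by
        congr 1; apply Finset.sum_congr rfl; intro l _; rw [mul_assoc, he]
    _ ≤ (∑ l ∈ T, (a l * Real.exp (f l / 2)) ^ 2) * (∑ l ∈ T, Real.exp (f l / 2) ^ 2) := key
    _ = (∑ l ∈ T, a l ^ 2 * Real.exp (f l)) * (∑ l ∈ T, Real.exp (f l)) := by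
        congr 1 <;> apply Finset.sum_congr rfl <;> intro l _
        · rw [mul_pow, show Real.exp (f l / 2) ^ 2 = Real.exp (f l) from by rw [sq, he]]
        · rw [sq, he]

lemma lse2_nonneg {C : Type} [Fintype C] (T : Finset C) (c a : C → ℝ) (t : ℝ) :
    0 ≤ ((∑ l ∈ T, a l ^ 2 * Real.exp (c l + t * a l)) * (∑ l ∈ T, Real.exp (c l + t * a l))
          - (∑ l ∈ T, a l * Real.exp (c l + t * a l)) ^ 2)
        / (∑ l ∈ T, Real.exp (c l + t * a l)) ^ 2 := by
  apply div_nonneg _ (sq_nonneg _)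
  have := cs_sq_le T a (fun l => c l + t * a l)
  linarith

lemma lse2_le {C : Type} [Fintype C] {T : Finset C} (hT : T.Nonempty) (c a : C → ℝ) (t : ℝ) :
    ((∑ l ∈ T, a l ^ 2 * Real.exp (c l + t * a l)) * (∑ l ∈ T, Real.exp (c l + t * a l))
          - (∑ l ∈ T, a l * Real.exp (c l + t * a l)) ^ 2)
        / (∑ l ∈ T, Real.exp (c l + t * a l)) ^ 2 ≤ ∑ l ∈ T, a l ^ 2 := by
  set v := ∑ l ∈ T, Real.exp (c l + t * a l) with hv
  have hvpos : 0 < v := sumexp_pos hT _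
  rw [div_le_iff₀ (by positivity)]
  have h1 : (∑ l ∈ T, a l ^ 2 * Real.exp (c l + t * a l)) ≤ (∑ l ∈ T, a l ^ 2) * v := by
    rw [Finset.sum_mul]
    apply Finset.sum_le_sum
    intro l hl
    apply mul_le_mul_of_nonneg_left _ (sq_nonneg _)
    rw [hv]
    exact Finset.single_le_sum (f := fun l => Real.exp (c l + t * a l))
      (fun i _ => (Real.exp_pos _).le) hl
  nlinarith [sq_nonneg (∑ l ∈ T, a l * Real.exp (c l + t * a l)), sq_nonneg v]

lemma taylor1D (g g1 g2 : ℝ → ℝ) (M : ℝ)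
    (hg : ∀ t, HasDerivAt g (g1 t) t)
    (hg1 : ∀ t, HasDerivAt g1 (g2 t) t)
    (hM : ∀ t, g2 t ≤ M) :
    g 1 ≤ g 0 + g1 0 + M / 2 := by
  have hstep1 : ∀ t : ℝ, 0 ≤ t → g1 t ≤ g1 0 + t * M := by
    intro t ht
    have mono : Monotone (fun t => t * M - g1 t) := by
      apply monotone_of_deriv_nonneg
      · exact (differentiable_id.mul_const M).sub fun s => (hg1 s).differentiableAt
      · intro s
        have : HasDerivAt (fun t => t * M - g1 t) (M - g2 s) s :=
          (hasDerivAt_mul_const M).sub (hg1 s)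
        rw [this.deriv]
        linarith [hM s]
    have := mono ht
    simp only [zero_mul, zero_sub] at this
    linarith
  have mono2 : MonotoneOn (fun t => g 0 + t * g1 0 + t ^ 2 * M / 2 - g t) (Set.Ici 0) := by
    apply monotoneOn_of_deriv_nonneg (convex_Ici 0)
    · apply Continuous.continuousOn
      have hgd : Differentiable ℝ g := fun s => (hg s).differentiableAt
      have hgc : Continuous g := hgd.continuous
      exact ((continuous_const.add (continuous_id.mul continuous_const)).add
        (((continuous_pow 2).mul continuous_const).div_const 2)).sub hgc
    · intro s _
      exact (((differentiable_const _).add (differentiable_id.mul_const _)).add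
        (((differentiable_id.pow 2).mul_const M).div_const 2)).sub
        (fun u => (hg u).differentiableAt) |>.differentiableAt.differentiableWithinAt
    · intro s hs
      rw [interior_Ici] at hs
      have hder : HasDerivAt (fun t => g 0 + t * g1 0 + t ^ 2 * M / 2 - g t)
          (g1 0 + s * M - g1 s) s := by
        have h1 : HasDerivAt (fun t : ℝ => g 0 + t * g1 0 + t ^ 2 * M / 2)
            (g1 0 + s * M) s := by
          have hp : HasDerivAt (fun t : ℝ => t ^ 2 * M / 2) (s * M) s := by
            have := ((hasDerivAt_pow 2 s).mul_const M).div_const 2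
            exact this.congr_deriv (by rw [Nat.cast_ofNat, show (2:ℕ) - 1 = 1 from rfl, pow_one]; ring)
          simpa using ((hasDerivAt_mul_const (g1 0)).const_add (g 0)).fun_add hp
        exact h1.sub (hg s)
      rw [hder.deriv]
      have := hstep1 s (le_of_lt hs)
      linarith
  have h01 := mono2 (Set.self_mem_Ici) (Set.mem_Ici.mpr zero_le_one) zero_le_one
  simp only [zero_mul, add_zero, zero_pow, one_mul, one_pow, ne_eq, OfNat.ofNat_ne_zero,
    not_false_eq_true, zero_div] at h01
  linarith

lemma pi_decomp {C : Type} [Fintype C] [DecidableEq C] {p : ℕ} (f : Fin p → C → ℝ) :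
    f = ∑ j, ∑ l, f j l • (Pi.single j (Pi.single l 1) : Fin p → C → ℝ) := by
  funext j' l'
  simp only [Finset.sum_apply, Pi.smul_apply, smul_eq_mul, Pi.single_apply,
    apply_ite (fun w : C → ℝ => w l')]
  simp [Finset.sum_ite_eq', mul_ite]

lemma eta_diff {C : Type} [Fintype C] {p r : ℕ}
    (x : Fin p → ℝ) (z : Fin r → ℝ) (α : C → ℝ) (γ : Fin r → C → ℝ) (l : C) :
    Differentiable ℝ (fun β' : Fin p → C → ℝ => eta x z α β' γ l) := by
  unfold eta
  apply Differentiable.add _ (differentiable_const _)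
  apply Differentiable.const_add
  apply Differentiable.fun_sum
  intro j _
  exact ((ContinuousLinearMap.proj (R := ℝ) (φ := fun _ : C => ℝ) l).comp
    (ContinuousLinearMap.proj (R := ℝ) (φ := fun _ : Fin p => C → ℝ) j)).differentiable.const_mul _

lemma negLogLik_diff {C : Type} [Fintype C] [Nonempty C] {K p r : ℕ} (n : Fin K → ℕ)
    (x : (k : Fin K) → Fin (n k) → Fin p → ℝ)
    (z : (k : Fin K) → Fin (n k) → Fin r → ℝ)
    (S : (k : Fin K) → Fin (n k) → Finset C) (hS : ∀ k i, (S k i).Nonempty)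
    (α : C → ℝ) (γ : Fin K → Fin r → C → ℝ) :
    Differentiable ℝ (fun β' : Fin p → C → ℝ => negLogLik n x z S α β' γ) := by
  unfold negLogLik
  apply Differentiable.const_mul
  apply Differentiable.fun_sum; intro k _
  apply Differentiable.fun_sum; intro i _
  have hrw : (fun β' : Fin p → C → ℝ => obsNLL (S k i) (eta (x k i) (z k i) α β' (γ k)))
      = fun β' => Real.log (∑ v, Real.exp (eta (x k i) (z k i) α β' (γ k) v))
        - Real.log (∑ l ∈ S k i, Real.exp (eta (x k i) (z k i) α β' (γ k) l)) := by
    funext β'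
    unfold obsNLL
    rw [Real.log_div (sumexp_pos (hS k i) _).ne' (sumexp_pos Finset.univ_nonempty _).ne']
    ring
  rw [hrw]
  have hsum : ∀ T : Finset C, T.Nonempty → Differentiable ℝ
      (fun β' : Fin p → C → ℝ => Real.log (∑ l ∈ T, Real.exp (eta (x k i) (z k i) α β' (γ k) l))) := by
    intro T hT
    have hs : Differentiable ℝ
        (fun β' : Fin p → C → ℝ => ∑ l ∈ T, Real.exp (eta (x k i) (z k i) α β' (γ k) l)) := by
      apply Differentiable.fun_sum; intro l _
      exact (eta_diff (x k i) (z k i) α (γ k) l).exp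
    intro β'
    exact (hs β').log (sumexp_pos hT _).ne'
  exact (hsum Finset.univ Finset.univ_nonempty).sub (hsum (S k i) (hS k i))

/-- Lipschitz-gradient quadratic upper bound (equation (5)) for the β-block:
for any step size `0 < s_β < N / (√|C| Σ_k ‖X_{(k)}‖_F²)`, the scaled negative
log-likelihood is majorized in β by its first-order expansion plus `(1/(2s_β))‖β - βᵗ‖_F²`. -/
theorem negLogLik_beta_quadratic_majorization
    {C : Type} [Fintype C] [DecidableEq C] [Nonempty C]
    {K p r : ℕ} (hK : 1 ≤ K) (n : Fin K → ℕ) (hn : ∀ k, 1 ≤ n k)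
    (x : (k : Fin K) → Fin (n k) → Fin p → ℝ)
    (z : (k : Fin K) → Fin (n k) → Fin r → ℝ)
    (S : (k : Fin K) → Fin (n k) → Finset C) (hS : ∀ k i, (S k i).Nonempty)
    (α : C → ℝ) (γ : Fin K → Fin r → C → ℝ)
    (βt β : Fin p → C → ℝ) (sβ : ℝ) (hsβ : 0 < sβ)
    (hsβ' : sβ < ((∑ k, n k : ℕ) : ℝ) /
      (Real.sqrt (Fintype.card C) * ∑ k, ∑ i, ∑ j, (x k i j) ^ 2)) :
    negLogLik n x z S α β γ ≤
      negLogLik n x z S α βt γ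
        + ∑ j, ∑ l,
            fderiv ℝ (fun β' => negLogLik n x z S α β' γ) βt
              (Pi.single j (Pi.single l 1)) * (β j l - βt j l)
        + (1 / (2 * sβ)) * ∑ j, ∑ l, (β j l - βt j l) ^ 2 := by
  classical
  set d : Fin p → C → ℝ := fun j l => β j l - βt j l with hd
  set N : ℝ := ((∑ k, n k : ℕ) : ℝ) with hN
  have hNpos : 0 < N := by
    have h1 : 0 < ∑ k, n k := by
      haveI : Nonempty (Fin K) := Fin.pos_iff_nonempty.mp hK
      exact Finset.sum_pos (fun k _ => hn k) Finset.univ_nonempty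
    rw [hN]
    exact_mod_cast h1
  set c : (k : Fin K) → Fin (n k) → C → ℝ :=
    fun k i l => eta (x k i) (z k i) α βt (γ k) l with hc
  set a : (k : Fin K) → Fin (n k) → C → ℝ :=
    fun k i l => ∑ j, x k i j * d j l with ha
  set g : ℝ → ℝ := fun t => N⁻¹ * ∑ k, ∑ i,
      (Real.log (∑ v, Real.exp (c k i v + t * a k i v))
        - Real.log (∑ l ∈ S k i, Real.exp (c k i l + t * a k i l))) with hgdef
  set g1 : ℝ → ℝ := fun t => N⁻¹ * ∑ k, ∑ i,
      ((∑ v, a k i v * Real.exp (c k i v + t * a k i v))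
          / (∑ v, Real.exp (c k i v + t * a k i v))
        - (∑ l ∈ S k i, a k i l * Real.exp (c k i l + t * a k i l))
          / (∑ l ∈ S k i, Real.exp (c k i l + t * a k i l))) with hg1def
  set g2 : ℝ → ℝ := fun t => N⁻¹ * ∑ k, ∑ i,
      (((∑ v, a k i v ^ 2 * Real.exp (c k i v + t * a k i v))
            * (∑ v, Real.exp (c k i v + t * a k i v))
          - (∑ v, a k i v * Real.exp (c k i v + t * a k i v)) ^ 2)
          / (∑ v, Real.exp (c k i v + t * a k i v)) ^ 2
        - ((∑ l ∈ S k i, a k i l ^ 2 * Real.exp (c k i l + t * a k i l))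
            * (∑ l ∈ S k i, Real.exp (c k i l + t * a k i l))
          - (∑ l ∈ S k i, a k i l * Real.exp (c k i l + t * a k i l)) ^ 2)
          / (∑ l ∈ S k i, Real.exp (c k i l + t * a k i l)) ^ 2) with hg2def
  set M : ℝ := N⁻¹ * ∑ k, ∑ i, ∑ l, a k i l ^ 2 with hM
  have hg : ∀ t, HasDerivAt g (g1 t) t := by
    intro t
    apply HasDerivAt.const_mul
    apply HasDerivAt.fun_sum; intro k _
    apply HasDerivAt.fun_sum; intro i _
    exact (hasDerivAt_lse Finset.univ_nonempty (c k i) (a k i) t).sub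
      (hasDerivAt_lse (hS k i) (c k i) (a k i) t)
  have hg1 : ∀ t, HasDerivAt g1 (g2 t) t := by
    intro t
    apply HasDerivAt.const_mul
    apply HasDerivAt.fun_sum; intro k _
    apply HasDerivAt.fun_sum; intro i _
    exact (hasDerivAt_lse1 Finset.univ_nonempty (c k i) (a k i) t).sub
      (hasDerivAt_lse1 (hS k i) (c k i) (a k i) t)
  have hMbound : ∀ t, g2 t ≤ M := by
    intro t
    rw [hg2def, hM]
    apply mul_le_mul_of_nonneg_left _ (inv_nonneg.mpr hNpos.le)
    apply Finset.sum_le_sum; intro k _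
    apply Finset.sum_le_sum; intro i _
    have h1 := lse2_le (T := Finset.univ) Finset.univ_nonempty (c k i) (a k i) t
    have h2 := lse2_nonneg (S k i) (c k i) (a k i) t
    linarith
  have htaylor := taylor1D g g1 g2 M hg hg1 hMbound
  -- identify g with negLogLik along the segment
  have hgt : ∀ t : ℝ, g t = negLogLik n x z S α (fun j l => βt j l + t * d j l) γ := by
    intro t
    simp only [hgdef]
    unfold negLogLik
    rw [← hN]
    congr 1
    apply Finset.sum_congr rfl; intro k _
    apply Finset.sum_congr rfl; intro i _
    have heta : ∀ l, eta (x k i) (z k i) α (fun j l => βt j l + t * d j l) (γ k) l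
        = c k i l + t * a k i l := by
      intro l
      rw [hc, ha]
      unfold eta
      have : (∑ j, x k i j * (βt j l + t * d j l))
          = (∑ j, x k i j * βt j l) + t * ∑ j, x k i j * d j l := by
        rw [Finset.mul_sum, ← Finset.sum_add_distrib]
        apply Finset.sum_congr rfl; intro j _; ring
      rw [this]; ring
    unfold obsNLL
    simp only [heta]
    rw [Real.log_div (sumexp_pos (hS k i) _).ne' (sumexp_pos Finset.univ_nonempty _).ne']
    ring
  have hg1_eq : g 1 = negLogLik n x z S α β γ := by
    rw [hgt 1]
    congr 1
    funext j l
    simp only [hd]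
    ring
  have hg0_eq : g 0 = negLogLik n x z S α βt γ := by
    rw [hgt 0]
    congr 1
    funext j l
    simp only [hd]
    ring
  -- the derivative at 0 equals the fderiv applied to d
  set Lfun : (Fin p → C → ℝ) → ℝ := fun β' => negLogLik n x z S α β' γ with hLfun
  have hLdiff : Differentiable ℝ Lfun := negLogLik_diff n x z S hS α γ
  set D := fderiv ℝ Lfun βt with hD
  have hchain : HasDerivAt g (D d) 0 := by
    have hθ : HasDerivAt (fun t : ℝ => βt + t • d) d 0 := by
      simpa using ((hasDerivAt_id (0:ℝ)).smul_const d).const_add βt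
    have hcomp := (hLdiff (βt + (0:ℝ) • d)).hasFDerivAt.comp_hasDerivAt 0 hθ
    have h0 : βt + (0:ℝ) • d = βt := by simp
    rw [h0] at hcomp
    have hfun : (Lfun ∘ fun t : ℝ => βt + t • d) = g := by
      funext t
      show Lfun (βt + t • d) = g t
      have heq : (βt + t • d) = (fun j l => βt j l + t * d j l) := by
        funext j l; simp
      rw [hgt t, hLfun, heq]
    rw [hfun] at hcomp
    exact hcomp
  have hDd : g1 0 = D d := (hg 0).unique hchain
  have hsum_fderiv : (∑ j, ∑ l, D (Pi.single j (Pi.single l 1)) * d j l) = D d := by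
    conv_rhs => rw [pi_decomp d]
    rw [map_sum]
    apply Finset.sum_congr rfl; intro j _
    rw [map_sum]
    apply Finset.sum_congr rfl; intro l _
    rw [map_smul, smul_eq_mul]
    ring
  -- bound M
  clear_value d c a g g1 g2 M Lfun D
  clear hgdef hg1def hg2def hc hg hg1 hMbound hgt hLfun hLdiff hD hchain
  set Q : ℝ := ∑ k, ∑ i, ∑ j, (x k i j) ^ 2 with hQ
  set D2 : ℝ := ∑ j, ∑ l, d j l ^ 2 with hD2
  have hD2nn : 0 ≤ D2 := Finset.sum_nonneg fun j _ => Finset.sum_nonneg fun l _ => sq_nonneg _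
  have hQnn : 0 ≤ Q := Finset.sum_nonneg fun k _ => Finset.sum_nonneg fun i _ =>
    Finset.sum_nonneg fun j _ => sq_nonneg _
  have hMle : M ≤ N⁻¹ * (Q * D2) := by
    rw [hM]
    apply mul_le_mul_of_nonneg_left _ (inv_nonneg.mpr hNpos.le)
    rw [hQ, Finset.sum_mul]
    apply Finset.sum_le_sum; intro k _
    rw [Finset.sum_mul]
    apply Finset.sum_le_sum; intro i _
    calc (∑ l, a k i l ^ 2) ≤ ∑ l : C, (∑ j, (x k i j) ^ 2) * (∑ j, d j l ^ 2) := by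
          apply Finset.sum_le_sum; intro l _
          rw [ha]
          exact Finset.sum_mul_sq_le_sq_mul_sq Finset.univ (fun j => x k i j) (fun j => d j l)
      _ = (∑ j, (x k i j) ^ 2) * D2 := by
          rw [← Finset.mul_sum, hD2, Finset.sum_comm]
  have hQN : Q * sβ ≤ N := by
    rcases eq_or_lt_of_le hQnn with hQ0 | hQpos
    · nlinarith
    · have hcard : (1:ℝ) ≤ Real.sqrt (Fintype.card C) := by
        rw [show (1:ℝ) = Real.sqrt 1 by simp]
        apply Real.sqrt_le_sqrt
        exact_mod_cast Fintype.card_pos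
      have hden : 0 < Real.sqrt (Fintype.card C) * Q := by positivity
      rw [lt_div_iff₀ hden] at hsβ'
      nlinarith
  have hM2 : M / 2 ≤ (1 / (2 * sβ)) * D2 := by
    have h1 : N⁻¹ * (Q * D2) ≤ (1 / sβ) * D2 := by
      rw [inv_mul_le_iff₀ hNpos]
      have h2 : N * ((1/sβ) * D2) = (N * D2) / sβ := by ring
      rw [h2, le_div_iff₀ hsβ]
      nlinarith [mul_le_mul_of_nonneg_right hQN hD2nn]
    have := hMle.trans h1
    rw [show (1 / (2 * sβ)) * D2 = ((1/sβ) * D2) / 2 by ring]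
    linarith
  have hfinal : (∑ j, ∑ l, (β j l - βt j l) ^ 2) = D2 := by
    simp only [hD2, hd]
  have hconv : (∑ j, ∑ l, D (Pi.single j (Pi.single l 1)) * (β j l - βt j l))
      = ∑ j, ∑ l, D (Pi.single j (Pi.single l 1)) * d j l := by
    simp only [hd]
  rw [← hg1_eq, ← hg0_eq, hfinal, hconv, hsum_fderiv, ← hDd]
  linarith
end

section
/- Suppose λ > 0 and ρ > 0, and suppose (α̂, β̂, γ̂) is a global minimizer of F_{λ,ρ} over ℝ^C × ℝ^{p×C} × (ℝ^{r×C})^K. Then every row of β̂ sums to zero, i.e. Σ_{l∈C} β̂_{j,l} = 0 for all j = 1,…,p, and every row of each γ̂_{(k)} sums to zero, i.e. Σ_{l∈C} [γ̂_{(k)}]_{q,l} = 0 for all q = 1,…,r and k = 1,…,K. -/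
open scoped BigOperators
set_option maxHeartbeats 1000000

/-- `obsNLL` is invariant under adding a constant to all coordinates of `η`. -/
lemma obsNLL_shift {C : Type} [Fintype C] (S : Finset C) (η : C → ℝ) (c : ℝ) :
    obsNLL S (fun l => η l + c) = obsNLL S η := by
  unfold obsNLL
  have h1 : ∀ (T : Finset C), ∑ l ∈ T, Real.exp (η l + c)
      = (∑ l ∈ T, Real.exp (η l)) * Real.exp c := by
    intro T
    rw [Finset.sum_mul]
    exact Finset.sum_congr rfl fun l _ => by rw [Real.exp_add]
  rw [h1, h1, mul_div_mul_right _ _ (Real.exp_ne_zero c)]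

/-- Sum of squares after centering equals sum of squares minus `(Σ v)²/|C|`. -/
lemma centered_sum_sq {C : Type} [Fintype C] [Nonempty C] (v : C → ℝ) :
    ∑ l, (v l - (∑ t, v t) / (Fintype.card C : ℝ)) ^ 2
      = ∑ l, (v l) ^ 2 - (∑ t, v t) ^ 2 / (Fintype.card C : ℝ) := by
  have hm : (0:ℝ) < (Fintype.card C : ℝ) := by exact_mod_cast Fintype.card_pos
  set s := ∑ t, v t with hs
  set c := s / (Fintype.card C : ℝ) with hc
  have h1 : ∀ l, (v l - c) ^ 2 = v l ^ 2 - 2 * c * v l + c ^ 2 := fun l => by ring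
  rw [Finset.sum_congr rfl fun l _ => h1 l]
  rw [Finset.sum_add_distrib, Finset.sum_sub_distrib, Finset.sum_const,
    ← Finset.mul_sum, ← hs, Finset.card_univ, nsmul_eq_mul]
  rw [hc]
  field_simp
  ring

/-- At any global minimizer of the penalized objective `F_{λ,ρ}` with `λ, ρ > 0`,
every row of `β̂` and every row of each `γ̂_{(k)}` sums to zero. -/
theorem minimizer_rows_sum_to_zero
    {C : Type} [Fintype C] [Nonempty C] {K p r : ℕ} (hK : 1 ≤ K)
    (n : Fin K → ℕ) (hn : ∀ k, 1 ≤ n k)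
    (x : (k : Fin K) → Fin (n k) → Fin p → ℝ)
    (z : (k : Fin K) → Fin (n k) → Fin r → ℝ)
    (S : (k : Fin K) → Fin (n k) → Finset C) (hS : ∀ k i, (S k i).Nonempty)
    (lam ρ : ℝ) (hlam : 0 < lam) (hρ : 0 < ρ)
    (αhat : C → ℝ) (βhat : Fin p → C → ℝ) (γhat : Fin K → Fin r → C → ℝ)
    (hmin : ∀ (α : C → ℝ) (β : Fin p → C → ℝ) (γ : Fin K → Fin r → C → ℝ),
      penObj n x z S lam ρ αhat βhat γhat ≤ penObj n x z S lam ρ α β γ) :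
    (∀ j : Fin p, ∑ l, βhat j l = 0) ∧
    (∀ (k : Fin K) (q : Fin r), ∑ l, γhat k q l = 0) := by
  classical
  have hm : (0:ℝ) < (Fintype.card C : ℝ) := by exact_mod_cast Fintype.card_pos
  set m : ℝ := (Fintype.card C : ℝ) with hmdef
  -- centered parameters
  set b : Fin p → ℝ := fun j => (∑ t, βhat j t) / m with hb
  set g : Fin K → Fin r → ℝ := fun k q => (∑ t, γhat k q t) / m with hg
  set β' : Fin p → C → ℝ := fun j l => βhat j l - b j with hβ'
  set γ' : Fin K → Fin r → C → ℝ := fun k q l => γhat k q l - g k q with hγ'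
  -- the negative log-likelihood is unchanged by centering
  have hNLL : negLogLik n x z S αhat β' γ' = negLogLik n x z S αhat βhat γhat := by
    unfold negLogLik
    refine congrArg _ (Finset.sum_congr rfl fun k _ => Finset.sum_congr rfl fun i _ => ?_)
    have hfun : eta (x k i) (z k i) αhat β' (γ' k)
        = fun l => eta (x k i) (z k i) αhat βhat (γhat k) l
            + (-(∑ j, x k i j * b j + ∑ q, z k i q * g k q)) := by
      funext l
      simp only [eta, hβ', hγ', mul_sub, Finset.sum_sub_distrib]
      ring
    rw [hfun, obsNLL_shift]
  -- termwise penalty comparisons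
  have hβle : ∀ j : Fin p, Real.sqrt (∑ l, (β' j l) ^ 2) ≤ Real.sqrt (∑ l, (βhat j l) ^ 2) := by
    intro j
    apply Real.sqrt_le_sqrt
    have := centered_sum_sq (βhat j)
    simp only [hβ', hb]
    rw [this]
    have : 0 ≤ (∑ t, βhat j t) ^ 2 / m := div_nonneg (sq_nonneg _) hm.le
    linarith
  have hγle : ∀ (k : Fin K) (q : Fin r), ∑ l, (γ' k q l) ^ 2 ≤ ∑ l, (γhat k q l) ^ 2 := by
    intro k q
    have := centered_sum_sq (γhat k q)
    simp only [hγ', hg]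
    rw [this]
    have : 0 ≤ (∑ t, γhat k q t) ^ 2 / m := div_nonneg (sq_nonneg _) hm.le
    linarith
  -- penalty sums
  set A : ℝ := ∑ j, Real.sqrt (∑ l, (βhat j l) ^ 2) with hA
  set A' : ℝ := ∑ j, Real.sqrt (∑ l, (β' j l) ^ 2) with hA'
  set B : ℝ := ∑ k, ∑ q, ∑ l, (γhat k q l) ^ 2 with hB
  set B' : ℝ := ∑ k, ∑ q, ∑ l, (γ' k q l) ^ 2 with hB'
  have hA'le : A' ≤ A := Finset.sum_le_sum fun j _ => hβle j
  have hB'le : B' ≤ B :=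
    Finset.sum_le_sum fun k _ => Finset.sum_le_sum fun q _ => hγle k q
  have hkey := hmin αhat β' γ'
  unfold penObj at hkey
  rw [hNLL] at hkey
  have hpen : lam * A + (ρ / 2) * B ≤ lam * A' + (ρ / 2) * B' := by
    simp only [← hA, ← hA', ← hB, ← hB'] at hkey
    linarith
  have hAeq : A' = A := by
    nlinarith [mul_le_mul_of_nonneg_left hA'le hlam.le,
      mul_le_mul_of_nonneg_left hB'le (by positivity : (0:ℝ) ≤ ρ / 2)]
  have hBeq : B' = B := by
    nlinarith [mul_le_mul_of_nonneg_left hA'le hlam.le,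
      mul_le_mul_of_nonneg_left hB'le (by positivity : (0:ℝ) ≤ ρ / 2)]
  constructor
  · intro j
    by_contra hne
    have hstrict : Real.sqrt (∑ l, (β' j l) ^ 2) < Real.sqrt (∑ l, (βhat j l) ^ 2) := by
      apply Real.sqrt_lt_sqrt (by positivity)
      have hcs := centered_sum_sq (βhat j)
      simp only [hβ', hb]
      rw [hcs]
      have : 0 < (∑ t, βhat j t) ^ 2 / m := div_pos (by positivity) hm
      linarith
    have : A' < A := by
      rw [hA, hA']
      exact Finset.sum_lt_sum (fun i _ => hβle i) ⟨j, Finset.mem_univ j, hstrict⟩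
    linarith [hAeq]
  · intro k q
    by_contra hne
    have hstrict : ∑ l, (γ' k q l) ^ 2 < ∑ l, (γhat k q l) ^ 2 := by
      have hcs := centered_sum_sq (γhat k q)
      simp only [hγ', hg]
      rw [hcs]
      have : 0 < (∑ t, γhat k q t) ^ 2 / m := div_pos (by positivity) hm
      linarith
    have : B' < B := by
      rw [hB, hB']
      refine Finset.sum_lt_sum (fun k' _ => Finset.sum_le_sum fun q' _ => hγle k' q')
        ⟨k, Finset.mem_univ k, ?_⟩
      exact Finset.sum_lt_sum (fun q' _ => hγle k q') ⟨q, Finset.mem_univ q, hstrict⟩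
    linarith [hBeq]
end
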